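/- Stability of fixed points in the parameters: if T_p F_1=F_1 and T_{p*} F_2=F_2 where both operators use the same maps w_i and shifts δ_j, and c=max_i max(p_i,p*_i)<1, then d_sup(F_1,F_2) ≤ (1/(1-c)) Σ_{j=1}^k |p_j - p*_j|. -/

import Mathlib

open Set Filter Topology

/-- A distribution function on `[0,1]`: non-decreasing, right-continuous,
`F 0 = 0` and `F 1 = 1`. -/
def IsDF (F : ℝ → ℝ) : Prop :=
  MonotoneOn F (Set.Icc 0 1) ∧
  (∀ a ∈ Set.Ico (0:ℝ) 1, ContinuousWithinAt F (Set.Icc a 1) a) ∧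
  F 0 = 0 ∧ F 1 = 1

/-- The sup distance between two functions, over `[0,1]`. -/
noncomputable def dsup (F G : ℝ → ℝ) : ℝ :=
  ⨆ x : Set.Icc (0:ℝ) 1, |F x - G x|

/-- Stability of the fixed point with respect to the parameters: if `F₁` and `F₂`
are fixed points of `T_p` and `T_q` (same maps `winv` and same shifts `δ`), and
`c = max_i max (p i) (q i) < 1`, then
`d_sup (F₁, F₂) ≤ (1/(1-c)) · ∑_j |p j - q j|`. -/
theorem stmt6 (n : ℕ) (p q : Fin (n+1) → ℝ) (δ : Fin n → ℝ)
    (winv : Fin (n+1) → ℝ → ℝ)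
    (F₁ F₂ : ℝ → ℝ)
    (hF₁ : IsDF F₁) (hF₂ : IsDF F₂)
    (hp : ∀ i, 0 ≤ p i) (hq : ∀ i, 0 ≤ q i) (hδ : ∀ j, 0 ≤ δ j)
    (hsump : ∑ i, p i + ∑ j, δ j = 1)
    (hsumq : ∑ i, q i + ∑ j, δ j = 1)
    (hfix : ∀ x ∈ Set.Icc (0:ℝ) 1, ∃ i : Fin (n+1),
      winv i x ∈ Set.Icc (0:ℝ) 1 ∧
      F₁ x = p i * F₁ (winv i x) + (∑ j ∈ Finset.Iio i, p j) +
        (∑ j ∈ Finset.filter (fun j : Fin n => (j : ℕ) < (i : ℕ)) Finset.univ, δ j) ∧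
      F₂ x = q i * F₂ (winv i x) + (∑ j ∈ Finset.Iio i, q j) +
        (∑ j ∈ Finset.filter (fun j : Fin n => (j : ℕ) < (i : ℕ)) Finset.univ, δ j))
    (hc : Finset.univ.sup' Finset.univ_nonempty (fun i => max (p i) (q i)) < 1) :
    dsup F₁ F₂ ≤
      (1 / (1 - Finset.univ.sup' Finset.univ_nonempty (fun i => max (p i) (q i)))) *
        ∑ j, |p j - q j| := by

  set c := Finset.univ.sup' Finset.univ_nonempty (fun i => max (p i) (q i)) with hcdef
  set S := ∑ j, |p j - q j| with hSdef
  haveI : Nonempty ↑(Set.Icc (0:ℝ) 1) := ⟨⟨0, by norm_num⟩⟩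
  obtain ⟨hm1, _, h01, h11⟩ := hF₁
  obtain ⟨hm2, _, h02, h12⟩ := hF₂
  have hF1mem : ∀ x ∈ Set.Icc (0:ℝ) 1, F₁ x ∈ Set.Icc (0:ℝ) 1 := by
    intro x hx
    constructor
    · calc (0:ℝ) = F₁ 0 := h01.symm
        _ ≤ F₁ x := hm1 (by norm_num) hx hx.1
    · calc F₁ x ≤ F₁ 1 := hm1 hx (by norm_num) hx.2
        _ = 1 := h11
  have hF2mem : ∀ x ∈ Set.Icc (0:ℝ) 1, F₂ x ∈ Set.Icc (0:ℝ) 1 := by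
    intro x hx
    constructor
    · calc (0:ℝ) = F₂ 0 := h02.symm
        _ ≤ F₂ x := hm2 (by norm_num) hx hx.1
    · calc F₂ x ≤ F₂ 1 := hm2 hx (by norm_num) hx.2
        _ = 1 := h12
  have hbdd : BddAbove (Set.range fun x : Set.Icc (0:ℝ) 1 => |F₁ x - F₂ x|) := by
    refine ⟨1, ?_⟩
    rintro y ⟨x, rfl⟩
    have h1 := hF1mem x x.2
    have h2 := hF2mem x x.2
    rw [abs_sub_le_iff]
    constructor <;> linarith [h1.1, h1.2, h2.1, h2.2]
  have hdle : ∀ x ∈ Set.Icc (0:ℝ) 1, |F₁ x - F₂ x| ≤ dsup F₁ F₂ := fun x hx =>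
    le_ciSup hbdd ⟨x, hx⟩
  have hd0 : 0 ≤ dsup F₁ F₂ :=
    le_trans (abs_nonneg _) (hdle 0 (by norm_num))
  have hcge : ∀ i, max (p i) (q i) ≤ c := fun i => Finset.le_sup' (fun i => max (p i) (q i)) (Finset.mem_univ i)
  have hc0 : 0 ≤ c := le_trans (hp 0) (le_trans (le_max_left _ _) (hcge 0))
  have key : dsup F₁ F₂ ≤ c * dsup F₁ F₂ + S := by
    apply ciSup_le
    rintro ⟨x, hx⟩
    obtain ⟨i, hw, h1, h2⟩ := hfix x hx
    have hw1 : |F₁ (winv i x) - F₂ (winv i x)| ≤ dsup F₁ F₂ := hdle _ hw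
    have hF2w := hF2mem _ hw
    have hSsplit : |p i - q i| + ∑ j ∈ Finset.Iio i, |p j - q j| ≤ S := by
      rw [hSdef]
      have h := Finset.sum_le_sum_of_subset_of_nonneg
        (Finset.subset_univ (insert i (Finset.Iio i)))
        (fun j _ _ => abs_nonneg (p j - q j))
      rwa [Finset.sum_insert (by simp)] at h
    have habs : |∑ j ∈ Finset.Iio i, (p j - q j)| ≤ ∑ j ∈ Finset.Iio i, |p j - q j| :=
      Finset.abs_sum_le_sum_abs _ _
    have hpi : p i ≤ c := le_trans (le_max_left _ _) (hcge i)
    have heq : F₁ x - F₂ x = p i * (F₁ (winv i x) - F₂ (winv i x))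
        + (p i - q i) * F₂ (winv i x) + ∑ j ∈ Finset.Iio i, (p j - q j) := by
      rw [h1, h2, Finset.sum_sub_distrib]; ring
    have step1 : |F₁ x - F₂ x| ≤ |p i * (F₁ (winv i x) - F₂ (winv i x))|
        + |(p i - q i) * F₂ (winv i x)| + |∑ j ∈ Finset.Iio i, (p j - q j)| := by
      rw [heq]
      exact (abs_add_le _ _).trans (add_le_add_left (abs_add_le _ _) _)
    have e1 : |p i * (F₁ (winv i x) - F₂ (winv i x))|
        ≤ c * dsup F₁ F₂ := by
      rw [abs_mul, abs_of_nonneg (hp i)]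
      exact mul_le_mul hpi hw1 (abs_nonneg _) hc0
    have e2 : |(p i - q i) * F₂ (winv i x)| ≤ |p i - q i| := by
      rw [abs_mul]
      calc |p i - q i| * |F₂ (winv i x)| ≤ |p i - q i| * 1 := by
            apply mul_le_mul_of_nonneg_left _ (abs_nonneg _)
            rw [abs_of_nonneg hF2w.1]; exact hF2w.2
        _ = |p i - q i| := mul_one _
    linarith
  have hc1 : 0 < 1 - c := by linarith
  rw [one_div, ← div_eq_inv_mul, le_div_iff₀ hc1]
  nlinarith [key]
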